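/- Let T be a tournament, and suppose C ⊆ V(T) satisfies χ⃗(T[C]) ≥ 2c and |C| ≤ s. If χ⃗(T) ≥ c·2^s + s + 1, then there exist sets A, B ⊆ V(T) with χ⃗(T[A]) ≥ c, χ⃗(T[B]) ≥ c, and every arc between A and B goes from A to B. -/

import Mathlib

variable {V : Type*}

/-- A tournament: an asymmetric, total relation. -/
def IsTournament (A : V → V → Prop) : Prop :=
  (∀ u v, A u v → ¬ A v u) ∧ (∀ u v, u ≠ v → A u v ∨ A v u)

/-- For an arc `e = uv`, `N(e) = N⁺(v) ∩ N⁻(u)`: vertices `w` with `v → w → u`. -/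
def ArcNbhd (A : V → V → Prop) (u v : V) : Set V := {w | A v w ∧ A w u}

/-- `S` induces an acyclic subdigraph. -/
def AcyclicOn (A : V → V → Prop) (S : Set V) : Prop :=
  ∀ v, ¬ Relation.TransGen (fun x y => x ∈ S ∧ y ∈ S ∧ A x y) v v

/-- The (di)chromatic number of the subdigraph induced on `S` is at most `k`:
`S` is covered by `k` sets, each inducing an acyclic subdigraph. -/
def ChromLE (A : V → V → Prop) (S : Set V) (k : ℕ) : Prop :=
  ∃ C : Fin k → Set V, (∀ v ∈ S, ∃ i, v ∈ C i) ∧ ∀ i, AcyclicOn A (C i ∩ S)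

/-- The (di)chromatic number of the subdigraph induced on `S` is at least `k`. -/
def ChromGE (A : V → V → Prop) (S : Set V) (k : ℕ) : Prop :=
  ∀ m, ChromLE A S m → k ≤ m

/-- Every arc neighborhood has chromatic number at most `t`. -/
def ArcBounded (A : V → V → Prop) (t : ℕ) : Prop :=
  ∀ u v, A u v → ChromLE A (ArcNbhd A u v) t

/-- `P 0, P 1, …, P k` is a directed walk/path. -/
def IsPathOn (A : V → V → Prop) (P : ℕ → V) (k : ℕ) : Prop :=
  ∀ i < k, A (P i) (P (i + 1))

/-- `P 0, …, P k` is a shortest directed path from `P 0` to `P k`. -/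
def IsShortestPath (A : V → V → Prop) (P : ℕ → V) (k : ℕ) : Prop :=
  IsPathOn A P k ∧
    ∀ (m : ℕ) (Q : ℕ → V), Q 0 = P 0 → Q m = P k → IsPathOn A Q m → k ≤ m

def StronglyConnected (A : V → V → Prop) : Prop :=
  ∀ u v : V, Relation.ReflTransGen A u v

def StronglyConnectedOn (A : V → V → Prop) (S : Set V) : Prop :=
  ∀ u ∈ S, ∀ v ∈ S, Relation.ReflTransGen (fun x y => x ∈ S ∧ y ∈ S ∧ A x y) u v

lemma acyclicOn_mono {A : V → V → Prop} {S S' : Set V} (h : S' ⊆ S)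
    (hS : AcyclicOn A S) : AcyclicOn A S' := by
  intro v hv
  exact hS v (Relation.TransGen.mono (r := fun x y => x ∈ S' ∧ y ∈ S' ∧ A x y) (p := fun x y => x ∈ S ∧ y ∈ S ∧ A x y) (by intro x y hxy; exact ⟨h hxy.1, h hxy.2.1, hxy.2.2⟩) v v hv)

lemma acyclicOn_of_no_arc {A : V → V → Prop} {S : Set V}
    (h : ∀ x ∈ S, ∀ y ∈ S, ¬ A x y) : AcyclicOn A S := by
  intro v hv
  cases hv with
  | single h' => exact h _ h'.1 _ h'.2.1 h'.2.2
  | tail _ h' => exact h _ h'.1 _ h'.2.1 h'.2.2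

lemma chromLE_empty (A : V → V → Prop) : ChromLE A ∅ 0 :=
  ⟨fun i => i.elim0, fun v hv => absurd hv (Set.notMem_empty v), fun i => i.elim0⟩

lemma chromLE_mono {A : V → V → Prop} {S : Set V} {m n : ℕ} (hmn : m ≤ n)
    (h : ChromLE A S m) : ChromLE A S n := by
  obtain ⟨Cl, cov, ac⟩ := h
  refine ⟨fun i => if h : (i : ℕ) < m then Cl ⟨i, h⟩ else ∅, fun v hv => ?_, fun i => ?_⟩
  · obtain ⟨i, hi⟩ := cov v hv
    exact ⟨⟨i, lt_of_lt_of_le i.2 hmn⟩, by simpa [i.2] using hi⟩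
  · by_cases h : (i : ℕ) < m
    · simpa [h] using ac ⟨i, h⟩
    · simp only [h, dif_neg, not_false_iff]
      exact acyclicOn_of_no_arc (fun x hx => absurd hx.1 (Set.notMem_empty x))

lemma chromLE_union {A : V → V → Prop} {S S' : Set V} {m n : ℕ}
    (h1 : ChromLE A S m) (h2 : ChromLE A S' n) : ChromLE A (S ∪ S') (m + n) := by
  obtain ⟨Cl, cov, ac⟩ := h1
  obtain ⟨Cl', cov', ac'⟩ := h2
  refine ⟨fun i => if h : (i : ℕ) < m then Cl ⟨i, h⟩ ∩ S else Cl' ⟨(i : ℕ) - m, by omega⟩ ∩ S',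
    fun v hv => ?_, fun i => ?_⟩
  · rcases hv with hv | hv
    · obtain ⟨i, hi⟩ := cov v hv
      exact ⟨⟨i, by omega⟩, by simpa [i.2] using ⟨hi, hv⟩⟩
    · obtain ⟨i, hi⟩ := cov' v hv
      refine ⟨⟨m + i, by omega⟩, ?_⟩
      have h1 : ¬ ((m + (i:ℕ)) < m) := by omega
      simp only [h1, dif_neg, not_false_iff]
      have h2 : ((m + (i:ℕ)) - m) = (i : ℕ) := by omega
      simp only [h2]
      exact ⟨by simpa using hi, hv⟩
  · by_cases h : (i : ℕ) < m
    · simp only [h, dif_pos]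
      exact acyclicOn_mono (by intro x hx; exact ⟨hx.1.1, hx.1.2⟩) (ac ⟨i, h⟩)
    · simp only [h, dif_neg, not_false_iff]
      exact acyclicOn_mono (by intro x hx; exact ⟨hx.1.1, hx.1.2⟩) (ac' _)

lemma chromLE_of_fintype {A : V → V → Prop} {S : Set V} {ι : Type*} [Fintype ι]
    (Cl : ι → Set V) (cov : ∀ v ∈ S, ∃ i, v ∈ Cl i) (ac : ∀ i, AcyclicOn A (Cl i ∩ S)) :
    ChromLE A S (Fintype.card ι) := by
  refine ⟨fun i => Cl ((Fintype.equivFin ι).symm i), fun v hv => ?_, fun i => ac _⟩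
  obtain ⟨i, hi⟩ := cov v hv
  exact ⟨Fintype.equivFin ι i, by simpa using hi⟩

lemma chromGE_of_not_le {A : V → V → Prop} {S : Set V} {c : ℕ}
    (h : ¬ ChromLE A S c) : ChromGE A S (c + 1) := by
  intro m hm
  by_contra hc
  exact h (chromLE_mono (by omega) hm)

lemma nonempty_of_chromGE {A : V → V → Prop} {S : Set V} {c : ℕ}
    (h : ChromGE A S (c + 1)) : S.Nonempty := by
  by_contra hne
  rw [Set.not_nonempty_iff_eq_empty] at hne
  have := h 0 (hne ▸ chromLE_empty A)
  omega

theorem stmt11 (A : V → V → Prop) (hT : IsTournament A) (c s : ℕ) (C : Finset V)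
    (hCchrom : ChromGE A ↑C (2 * c)) (hCcard : C.card ≤ s)
    (hchi : ChromGE A Set.univ (c * 2 ^ s + s + 1)) :
    ∃ Aset Bset : Set V, ChromGE A Aset c ∧ ChromGE A Bset c ∧
      ∀ a ∈ Aset, ∀ b ∈ Bset, A a b ∧ ¬ A b a := by
  classical
  obtain _ | c := c
  · exact ⟨∅, ∅, fun m _ => Nat.zero_le m, fun m _ => Nat.zero_le m,
      fun a ha => absurd ha (Set.notMem_empty a)⟩
  set out : V → Finset V := fun w => C.filter (fun x => A w x) with hout
  set Scls : Finset V → Set V := fun D => {w | w ∉ C ∧ out w = D} with hScls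
  have key : ∃ D : Finset V, ChromGE A (Scls D) (c + 1) := by
    by_contra hk
    push_neg at hk
    have hall : ∀ D, ChromLE A (Scls D) c := by
      intro D
      by_contra h'
      exact hk D (chromGE_of_not_le h')
    choose F covF acF using hall
    let ι := (↥C.powerset × Fin c) ⊕ ↥C
    have hLE : ChromLE A Set.univ (Fintype.card ι) := by
      refine chromLE_of_fintype
        (Cl := fun i => Sum.rec (fun p => F p.1.1 p.2 ∩ Scls p.1.1) (fun x => {(x : V)}) i)
        (fun v _ => ?_) (fun i => ?_)
      · by_cases hv : v ∈ C
        · exact ⟨Sum.inr ⟨v, hv⟩, rfl⟩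
        · have hvS : v ∈ Scls (out v) := ⟨hv, rfl⟩
          obtain ⟨j, hj⟩ := covF (out v) v hvS
          exact ⟨Sum.inl (⟨out v, Finset.mem_powerset.2 (Finset.filter_subset _ _)⟩, j),
            hj, hvS⟩
      · rcases i with ⟨D, j⟩ | x
        · exact acyclicOn_mono Set.inter_subset_left (acF D.1 j)
        · refine acyclicOn_of_no_arc (fun y hy z hz hyz => ?_)
          have hy' : y = (x : V) := hy.1
          have hz' : z = (x : V) := hz.1
          subst hy'; subst hz'
          exact hT.1 _ _ hyz hyz
    have hcard : Fintype.card ι = 2 ^ C.card * c + C.card := by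
      simp [ι, Finset.card_powerset]
    have hb := hchi _ hLE
    rw [hcard] at hb
    have hp : (2 : ℕ) ^ C.card ≤ 2 ^ s := Nat.pow_le_pow_right (by norm_num) hCcard
    have hle : 2 ^ C.card * c + C.card ≤ 2 ^ s * c + s :=
      add_le_add (Nat.mul_le_mul_right c hp) hCcard
    have hfin : (c + 1) * 2 ^ s + s + 1 ≤ 2 ^ s * c + s := le_trans hb hle
    have hr : (c + 1) * 2 ^ s = 2 ^ s * c + 2 ^ s := by ring
    rw [hr] at hfin
    have ht : 1 ≤ 2 ^ s := Nat.one_le_two_pow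
    omega
  obtain ⟨D, hD⟩ := key
  obtain ⟨v, hv⟩ := nonempty_of_chromGE hD
  have hDC : D ⊆ C := hv.2 ▸ Finset.filter_subset _ _
  have hsplit : ChromGE A ↑D (c + 1) ∨ ChromGE A ↑(C \ D) (c + 1) := by
    by_contra h
    push_neg at h
    obtain ⟨h1, h2⟩ := h
    simp only [ChromGE, not_forall, not_le] at h1 h2
    obtain ⟨m, hm, hm'⟩ := h1
    obtain ⟨n, hn, hn'⟩ := h2
    have hun : (↑D : Set V) ∪ ↑(C \ D) = (↑C : Set V) := by
      rw [← Finset.coe_union, Finset.union_sdiff_of_subset hDC]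
    have := hCchrom (m + n) (hun ▸ chromLE_union hm hn)
    omega
  rcases hsplit with hge | hge
  · refine ⟨Scls D, ↑D, hD, hge, fun a ha b hb => ?_⟩
    have hb' : b ∈ out a := ha.2 ▸ hb
    have hab : A a b := (Finset.mem_filter.1 hb').2
    exact ⟨hab, hT.1 a b hab⟩
  · refine ⟨↑(C \ D), Scls D, hge, hD, fun a ha b hb => ?_⟩
    have ha' := Finset.mem_sdiff.1 ha
    have hba : ¬ A b a := fun h => ha'.2 (hb.2 ▸ Finset.mem_filter.2 ⟨ha'.1, h⟩)
    have hne : a ≠ b := fun h => hb.1 (h ▸ ha'.1)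
    rcases hT.2 a b hne with h | h
    · exact ⟨h, hba⟩
    · exact absurd h hba
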